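/- Let G be continuously differentiable on an open interval containing [ν, μ] and the point (ν+μ)/(2m), with m ∈ (0,1], and let W : [ν, μ] → ℝ be nonnegative, continuous, and symmetric about (ν+μ)/2. If |G'| is m-convex, then |((G(ν)+G(μ))/2) ∫_ν^μ W(x) dx − ∫_ν^μ W(x)G(x) dx| ≤ ((μ-ν)²/4) · ‖W‖_∞ · [ (1/3)(|G'(ν)| + |G'(μ)|) + (1/3)·m·|G'((ν+μ)/(2m))| ]. -/

import Mathlib

open intervalIntegral in
lemma poly_int_left (r s A' C' : ℝ) :
    ∫ t in r..s, ((s-t)*A' + (t-r)*C') * (s-t)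
      = (s-r)^3/3*A' + (s-r)^3/6*C' := by
  have h1 : (fun t : ℝ => ((s-t)*A' + (t-r)*C') * (s-t))
      = fun t : ℝ => (A'-C')*t^2 + (C'*s + C'*r - 2*A'*s)*t + (A'*s^2 - C'*r*s) := by
    funext t; ring
  rw [h1]
  have i1 : IntervalIntegrable (fun t : ℝ => (A'-C')*t^2) MeasureTheory.volume r s :=
    (by continuity : Continuous fun t : ℝ => (A'-C')*t^2).intervalIntegrable r s
  have i2 : IntervalIntegrable (fun t : ℝ => (C'*s + C'*r - 2*A'*s)*t) MeasureTheory.volume r s :=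
    (by continuity : Continuous fun t : ℝ => (C'*s + C'*r - 2*A'*s)*t).intervalIntegrable r s
  have i3 : IntervalIntegrable (fun _ : ℝ => (A'*s^2 - C'*r*s)) MeasureTheory.volume r s :=
    intervalIntegrable_const
  rw [integral_add (i1.add i2) i3, integral_add i1 i2, integral_const_mul,
    integral_const_mul, integral_pow, integral_id, integral_const]
  simp only [smul_eq_mul]
  ring

open intervalIntegral in
lemma poly_int_right (r s A' C' : ℝ) :
    ∫ t in r..s, ((t-r)*A' + (s-t)*C') * (t-r)
      = (s-r)^3/3*A' + (s-r)^3/6*C' := by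
  have h1 : (fun t : ℝ => ((t-r)*A' + (s-t)*C') * (t-r))
      = fun t : ℝ => (A'-C')*t^2 + (C'*s + C'*r - 2*A'*r)*t + (A'*r^2 - C'*r*s) := by
    funext t; ring
  rw [h1]
  have i1 : IntervalIntegrable (fun t : ℝ => (A'-C')*t^2) MeasureTheory.volume r s :=
    (by continuity : Continuous fun t : ℝ => (A'-C')*t^2).intervalIntegrable r s
  have i2 : IntervalIntegrable (fun t : ℝ => (C'*s + C'*r - 2*A'*r)*t) MeasureTheory.volume r s :=
    (by continuity : Continuous fun t : ℝ => (C'*s + C'*r - 2*A'*r)*t).intervalIntegrable r s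
  have i3 : IntervalIntegrable (fun _ : ℝ => (A'*r^2 - C'*r*s)) MeasureTheory.volume r s :=
    intervalIntegrable_const
  rw [integral_add (i1.add i2) i3, integral_add i1 i2, integral_const_mul,
    integral_const_mul, integral_pow, integral_id, integral_const]
  simp only [smul_eq_mul]
  ring

theorem fejer_bound_m_convex
    (ν μ m a b : ℝ) (hνμ : ν < μ) (hm : m ∈ Set.Ioc (0:ℝ) 1)
    (hab : Set.Icc ν μ ⊆ Set.Ioo a b) (hmid : (ν + μ) / (2 * m) ∈ Set.Ioo a b)
    (G W : ℝ → ℝ)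
    (hG : ContDiffOn ℝ 1 G (Set.Ioo a b))
    (hG' : ∀ x ∈ Set.Ioo a b, ∀ y ∈ Set.Ioo a b, ∀ γ ∈ Set.Icc (0:ℝ) 1,
      |deriv G (γ * x + m * (1 - γ) * y)| ≤ γ * |deriv G x| + m * (1 - γ) * |deriv G y|)
    (hWnonneg : ∀ x ∈ Set.Icc ν μ, 0 ≤ W x)
    (hWcont : ContinuousOn W (Set.Icc ν μ))
    (hWsym : ∀ x ∈ Set.Icc ν μ, W (ν + μ - x) = W x) :
    |(G ν + G μ) / 2 * (∫ x in ν..μ, W x) - ∫ x in ν..μ, W x * G x|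
      ≤ (μ - ν) ^ 2 / 4 * sSup (W '' Set.Icc ν μ) *
        ((1/3) * (|deriv G ν| + |deriv G μ|)
          + (1/3) * m * |deriv G ((ν + μ) / (2 * m))|) := by
  obtain ⟨hm0, _hm1⟩ := hm
  have hνμ' : ν ≤ μ := hνμ.le
  set dd : ℝ := (ν + μ) / (2 * m) with hddef
  set B : ℝ := sSup (W '' Set.Icc ν μ) with hBdef
  set A : ℝ := |deriv G ν| with hAdef
  set A2 : ℝ := |deriv G μ| with hA2def
  set C : ℝ := |deriv G dd| with hCdef
  set c : ℝ := (ν + μ) / 2 with hcdef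
  set h : ℝ := (μ - ν) / 2 with hhdef
  have hhpos : 0 < h := by rw [hhdef]; linarith
  have hνc : ν ≤ c := by rw [hcdef]; linarith
  have hcμ : c ≤ μ := by rw [hcdef]; linarith
  have hcν : c - ν = h := by rw [hcdef, hhdef]; ring
  have hμc : μ - c = h := by rw [hcdef, hhdef]; ring
  have hsubν : ν ∈ Set.Ioo a b := hab ⟨le_refl ν, hνμ'⟩
  have hsubμ : μ ∈ Set.Ioo a b := hab ⟨hνμ', le_refl μ⟩
  -- the clamp of x into [ν, μ]
  have hclmem : ∀ x : ℝ, min μ (max ν x) ∈ Set.Icc ν μ := fun x =>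
    ⟨le_min hνμ' (le_max_left _ _), min_le_left _ _⟩
  set Wc : ℝ → ℝ := fun x => W (min μ (max ν x)) with hWcdef
  have hWcC : Continuous Wc :=
    hWcont.comp_continuous (continuous_const.min (continuous_const.max continuous_id)) hclmem
  have hWceq : ∀ x ∈ Set.Icc ν μ, Wc x = W x := by
    intro x hx
    rw [hWcdef]
    simp only [max_eq_right hx.1, min_eq_right hx.2]
  have hbdd : BddAbove (W '' Set.Icc ν μ) :=
    (isCompact_Icc.image_of_continuousOn hWcont).bddAbove
  have hWcleB : ∀ x : ℝ, Wc x ≤ B := fun x => le_csSup hbdd ⟨_, hclmem x, rfl⟩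
  have hWcnn : ∀ x : ℝ, 0 ≤ Wc x := fun x => hWnonneg _ (hclmem x)
  have hB0 : 0 ≤ B := le_trans (hWcnn ν) (hWcleB ν)
  -- antiderivative of Wc
  set P : ℝ → ℝ := fun t => ∫ x in ν..t, Wc x with hPdef
  have hPd : ∀ t : ℝ, HasDerivAt P (Wc t) t := fun t =>
    intervalIntegral.integral_hasDerivAt_right (hWcC.intervalIntegrable _ _)
      (hWcC.stronglyMeasurableAtFilter _ _) hWcC.continuousAt
  have hPcont : Continuous P :=
    continuous_iff_continuousAt.2 fun t => (hPd t).continuousAt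
  -- symmetry: ∫_c^μ Wc = ∫_ν^c Wc
  have hsym1 : (∫ x in c..μ, Wc x) = ∫ x in ν..c, Wc x := by
    have h1 : (∫ x in ν..c, Wc (ν + μ - x)) = ∫ x in (ν+μ-c)..(ν+μ-ν), Wc x :=
      intervalIntegral.integral_comp_sub_left Wc (ν+μ)
    have h2 : ν + μ - c = c := by rw [hcdef]; ring
    have h3 : ν + μ - ν = μ := by ring
    rw [h2, h3] at h1
    rw [← h1]
    apply intervalIntegral.integral_congr
    intro x hx
    rw [Set.uIcc_of_le hνc] at hx
    have hxm : x ∈ Set.Icc ν μ := ⟨hx.1, hx.2.trans hcμ⟩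
    have hxm2 : ν + μ - x ∈ Set.Icc ν μ := ⟨by linarith [hxm.2], by linarith [hxm.1]⟩
    simp only
    rw [hWceq _ hxm2, hWceq _ hxm, hWsym x hxm]
  have hPc2 : P μ = 2 * P c := by
    have : (∫ x in ν..c, Wc x) + ∫ x in c..μ, Wc x = ∫ x in ν..μ, Wc x :=
      intervalIntegral.integral_add_adjacent_intervals
        (hWcC.intervalIntegrable _ _) (hWcC.intervalIntegrable _ _)
    rw [hsym1] at this
    simp only [hPdef]
    linarith [this]
  -- G facts
  have hGd : ∀ x ∈ Set.Icc ν μ, HasDerivAt G (deriv G x) x := fun x hx =>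
    ((hG.differentiableOn one_ne_zero).differentiableAt (isOpen_Ioo.mem_nhds (hab hx))).hasDerivAt
  have hG'c : ContinuousOn (deriv G) (Set.Icc ν μ) :=
    (hG.continuousOn_deriv_of_isOpen isOpen_Ioo le_rfl).mono hab
  have hIG' : IntervalIntegrable (deriv G) MeasureTheory.volume ν μ := by
    apply ContinuousOn.intervalIntegrable
    rwa [Set.uIcc_of_le hνμ']
  -- integration by parts
  have hibp : (∫ x in ν..μ, P x * deriv G x)
      = P μ * G μ - P ν * G ν - ∫ x in ν..μ, Wc x * G x := by
    apply intervalIntegral.integral_mul_deriv_eq_deriv_mul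
    · intro x _; exact hPd x
    · intro x hx; exact hGd x (by rwa [Set.uIcc_of_le hνμ'] at hx)
    · exact hWcC.intervalIntegrable ν μ
    · exact hIG'
  have hPν : P ν = 0 := intervalIntegral.integral_same
  have hWG : (∫ x in ν..μ, W x * G x) = ∫ x in ν..μ, Wc x * G x := by
    apply intervalIntegral.integral_congr
    intro x hx
    rw [Set.uIcc_of_le hνμ'] at hx
    simp only [hWceq _ hx]
  have hW : (∫ x in ν..μ, W x) = P μ := by
    simp only [hPdef]
    apply intervalIntegral.integral_congr
    intro x hx
    rw [Set.uIcc_of_le hνμ'] at hx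
    exact (hWceq _ hx).symm
  have hftc : (∫ x in ν..μ, deriv G x) = G μ - G ν :=
    intervalIntegral.integral_eq_sub_of_hasDerivAt
      (fun x hx => hGd x (by rwa [Set.uIcc_of_le hνμ'] at hx)) hIG'
  set k : ℝ → ℝ := fun t => P t - P μ / 2 with hkdef
  have hkc : Continuous k := hPcont.sub continuous_const
  -- generic integrability helper
  have hkG'int : ∀ p q : ℝ, Set.uIcc p q ⊆ Set.Icc ν μ →
      IntervalIntegrable (fun x => k x * deriv G x) MeasureTheory.volume p q :=
    fun p q hpq => ((hkc.continuousOn.mul hG'c).mono hpq).intervalIntegrable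
  have huIccνμ : Set.uIcc ν μ ⊆ Set.Icc ν μ := by rw [Set.uIcc_of_le hνμ']
  have huIccνc : Set.uIcc ν c ⊆ Set.Icc ν μ := by
    rw [Set.uIcc_of_le hνc]; exact Set.Icc_subset_Icc le_rfl hcμ
  have huIcccμ : Set.uIcc c μ ⊆ Set.Icc ν μ := by
    rw [Set.uIcc_of_le hcμ]; exact Set.Icc_subset_Icc hνc le_rfl
  -- the key identity
  have hkey : (G ν + G μ)/2 * (∫ x in ν..μ, W x) - (∫ x in ν..μ, W x * G x)
      = ∫ x in ν..μ, k x * deriv G x := by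
    have hPG'int : IntervalIntegrable (fun x => P x * deriv G x) MeasureTheory.volume ν μ :=
      ((hPcont.continuousOn.mul hG'c).mono huIccνμ).intervalIntegrable
    have hconstint : IntervalIntegrable (fun x => P μ / 2 * deriv G x) MeasureTheory.volume ν μ :=
      hIG'.const_mul _
    have hsplit : (∫ x in ν..μ, k x * deriv G x)
        = (∫ x in ν..μ, P x * deriv G x) - P μ / 2 * ∫ x in ν..μ, deriv G x := by
      rw [← intervalIntegral.integral_const_mul,
        ← intervalIntegral.integral_sub hPG'int hconstint]
      apply intervalIntegral.integral_congr
      intro x _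
      simp only [hkdef]
      ring
    rw [hsplit, hibp, hftc, hW, hWG, hPν]
    ring
  -- kernel bounds
  have hkb1 : ∀ t ∈ Set.Icc ν c, |k t| ≤ B * (c - t) := by
    intro t ht
    have h2 : P c - P t = ∫ x in t..c, Wc x :=
      intervalIntegral.integral_interval_sub_left
        (hWcC.intervalIntegrable ν c) (hWcC.intervalIntegrable ν t)
    have h3 : k t = -(P c - P t) := by
      simp only [hkdef, hPc2]; ring
    have h4 : ‖∫ x in t..c, Wc x‖ ≤ B * |c - t| := by
      apply intervalIntegral.norm_integral_le_of_norm_le_const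
      intro x _
      rw [Real.norm_eq_abs, abs_of_nonneg (hWcnn x)]
      exact hWcleB x
    rw [h3, abs_neg]
    rw [Real.norm_eq_abs] at h4
    calc |P c - P t| = |∫ x in t..c, Wc x| := by rw [h2]
      _ ≤ B * |c - t| := h4
      _ = B * (c - t) := by rw [abs_of_nonneg (by linarith [ht.2])]
  have hkb2 : ∀ t ∈ Set.Icc c μ, |k t| ≤ B * (t - c) := by
    intro t ht
    have h2 : P t - P c = ∫ x in c..t, Wc x :=
      intervalIntegral.integral_interval_sub_left
        (hWcC.intervalIntegrable ν t) (hWcC.intervalIntegrable ν c)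
    have h3 : k t = P t - P c := by
      simp only [hkdef, hPc2]; ring
    have h4 : ‖∫ x in c..t, Wc x‖ ≤ B * |t - c| := by
      apply intervalIntegral.norm_integral_le_of_norm_le_const
      intro x _
      rw [Real.norm_eq_abs, abs_of_nonneg (hWcnn x)]
      exact hWcleB x
    rw [Real.norm_eq_abs] at h4
    calc |k t| = |∫ x in c..t, Wc x| := by rw [h3, h2]
      _ ≤ B * |t - c| := h4
      _ = B * (t - c) := by rw [abs_of_nonneg (by linarith [ht.1])]
  -- derivative bounds from m-convexity
  have hgb1 : ∀ t ∈ Set.Icc ν c, |deriv G t| ≤ (c-t)/h * A + m * ((t-ν)/h) * C := by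
    intro t ht
    have hγ : (c - t) / h ∈ Set.Icc (0:ℝ) 1 :=
      ⟨div_nonneg (by linarith [ht.2]) hhpos.le,
        by rw [div_le_one hhpos]; linarith [ht.1, hcν]⟩
    have key := hG' ν hsubν dd hmid ((c-t)/h) hγ
    have hpt : (c-t)/h * ν + m * (1 - (c-t)/h) * dd = t := by
      rw [hddef, hcdef, hhdef]
      field_simp [hm0.ne', sub_ne_zero.mpr hνμ.ne']
      ring
    have h1γ : 1 - (c-t)/h = (t-ν)/h := by
      rw [eq_div_iff hhpos.ne', sub_mul, div_mul_cancel₀ _ hhpos.ne']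
      linarith [hcν]
    rw [hpt, h1γ] at key
    calc |deriv G t| ≤ (c-t)/h * |deriv G ν| + m * ((t-ν)/h) * |deriv G dd| := key
      _ = (c-t)/h * A + m * ((t-ν)/h) * C := by rw [hAdef, hCdef]
  have hgb2 : ∀ t ∈ Set.Icc c μ, |deriv G t| ≤ (t-c)/h * A2 + m * ((μ-t)/h) * C := by
    intro t ht
    have hγ : (t - c) / h ∈ Set.Icc (0:ℝ) 1 :=
      ⟨div_nonneg (by linarith [ht.1]) hhpos.le,
        by rw [div_le_one hhpos]; linarith [ht.2, hμc]⟩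
    have key := hG' μ hsubμ dd hmid ((t-c)/h) hγ
    have hpt : (t-c)/h * μ + m * (1 - (t-c)/h) * dd = t := by
      rw [hddef, hcdef, hhdef]
      field_simp [hm0.ne', sub_ne_zero.mpr hνμ.ne']
      ring
    have h1γ : 1 - (t-c)/h = (μ-t)/h := by
      rw [eq_div_iff hhpos.ne', sub_mul, div_mul_cancel₀ _ hhpos.ne']
      linarith [hμc]
    rw [hpt, h1γ] at key
    calc |deriv G t| ≤ (t-c)/h * |deriv G μ| + m * ((μ-t)/h) * |deriv G dd| := key
      _ = (t-c)/h * A2 + m * ((μ-t)/h) * C := by rw [hA2def, hCdef]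
  -- combine pointwise on each half
  have hprod1 : ∀ t ∈ Set.Icc ν c, |k t * deriv G t|
      ≤ B/h * (((c-t)*A + (t-ν)*(m*C)) * (c-t)) := by
    intro t ht
    have h1 : |k t * deriv G t| = |k t| * |deriv G t| := abs_mul _ _
    have h2 : |k t| * |deriv G t| ≤ (B * (c-t)) * ((c-t)/h * A + m * ((t-ν)/h) * C) :=
      mul_le_mul (hkb1 t ht) (hgb1 t ht) (abs_nonneg _)
        (mul_nonneg hB0 (by linarith [ht.2]))
    have h3 : (B * (c-t)) * ((c-t)/h * A + m * ((t-ν)/h) * C)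
        = B/h * (((c-t)*A + (t-ν)*(m*C)) * (c-t)) := by
      field_simp
    rw [h1]; rw [h3] at h2; exact h2
  have hprod2 : ∀ t ∈ Set.Icc c μ, |k t * deriv G t|
      ≤ B/h * (((t-c)*A2 + (μ-t)*(m*C)) * (t-c)) := by
    intro t ht
    have h1 : |k t * deriv G t| = |k t| * |deriv G t| := abs_mul _ _
    have h2 : |k t| * |deriv G t| ≤ (B * (t-c)) * ((t-c)/h * A2 + m * ((μ-t)/h) * C) :=
      mul_le_mul (hkb2 t ht) (hgb2 t ht) (abs_nonneg _)
        (mul_nonneg hB0 (by linarith [ht.1]))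
    have h3 : (B * (t-c)) * ((t-c)/h * A2 + m * ((μ-t)/h) * C)
        = B/h * (((t-c)*A2 + (μ-t)*(m*C)) * (t-c)) := by
      field_simp
    rw [h1]; rw [h3] at h2; exact h2
  -- integral bounds on each half
  have hint1 : |∫ x in ν..c, k x * deriv G x| ≤ B/h * (h^3/3*A + h^3/6*(m*C)) := by
    have hi1 : IntervalIntegrable (fun x => |k x * deriv G x|) MeasureTheory.volume ν c :=
      (hkG'int ν c huIccνc).abs
    have hi2 : IntervalIntegrable
        (fun x => B/h * (((c-x)*A + (x-ν)*(m*C)) * (c-x))) MeasureTheory.volume ν c :=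
      (by fun_prop : Continuous fun x : ℝ =>
        B/h * (((c-x)*A + (x-ν)*(m*C)) * (c-x))).intervalIntegrable _ _
    calc |∫ x in ν..c, k x * deriv G x|
        ≤ ∫ x in ν..c, |k x * deriv G x| :=
          intervalIntegral.abs_integral_le_integral_abs hνc
      _ ≤ ∫ x in ν..c, B/h * (((c-x)*A + (x-ν)*(m*C)) * (c-x)) :=
          intervalIntegral.integral_mono_on hνc hi1 hi2 hprod1
      _ = B/h * ∫ x in ν..c, ((c-x)*A + (x-ν)*(m*C)) * (c-x) :=
          intervalIntegral.integral_const_mul _ _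
      _ = B/h * ((c-ν)^3/3*A + (c-ν)^3/6*(m*C)) := by rw [poly_int_left]
      _ = B/h * (h^3/3*A + h^3/6*(m*C)) := by rw [hcν]
  have hint2 : |∫ x in c..μ, k x * deriv G x| ≤ B/h * (h^3/3*A2 + h^3/6*(m*C)) := by
    have hi1 : IntervalIntegrable (fun x => |k x * deriv G x|) MeasureTheory.volume c μ :=
      (hkG'int c μ huIcccμ).abs
    have hi2 : IntervalIntegrable
        (fun x => B/h * (((x-c)*A2 + (μ-x)*(m*C)) * (x-c))) MeasureTheory.volume c μ :=
      (by fun_prop : Continuous fun x : ℝ =>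
        B/h * (((x-c)*A2 + (μ-x)*(m*C)) * (x-c))).intervalIntegrable _ _
    calc |∫ x in c..μ, k x * deriv G x|
        ≤ ∫ x in c..μ, |k x * deriv G x| :=
          intervalIntegral.abs_integral_le_integral_abs hcμ
      _ ≤ ∫ x in c..μ, B/h * (((x-c)*A2 + (μ-x)*(m*C)) * (x-c)) :=
          intervalIntegral.integral_mono_on hcμ hi1 hi2 hprod2
      _ = B/h * ∫ x in c..μ, ((x-c)*A2 + (μ-x)*(m*C)) * (x-c) :=
          intervalIntegral.integral_const_mul _ _
      _ = B/h * ((μ-c)^3/3*A2 + (μ-c)^3/6*(m*C)) := by rw [poly_int_right]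
      _ = B/h * (h^3/3*A2 + h^3/6*(m*C)) := by rw [hμc]
  -- put everything together
  have hsplit2 : (∫ x in ν..μ, k x * deriv G x)
      = (∫ x in ν..c, k x * deriv G x) + ∫ x in c..μ, k x * deriv G x :=
    (intervalIntegral.integral_add_adjacent_intervals
      (hkG'int ν c huIccνc) (hkG'int c μ huIcccμ)).symm
  have hfin : B/h * (h^3/3*A + h^3/6*(m*C)) + B/h * (h^3/3*A2 + h^3/6*(m*C))
      = (μ - ν)^2/4 * B * ((1/3) * (A + A2) + (1/3) * m * C) := by
    rw [hhdef]
    have hne : μ - ν ≠ 0 := by linarith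
    field_simp
    ring
  rw [hkey, hsplit2]
  calc |(∫ x in ν..c, k x * deriv G x) + ∫ x in c..μ, k x * deriv G x|
      ≤ |∫ x in ν..c, k x * deriv G x| + |∫ x in c..μ, k x * deriv G x| := abs_add_le _ _
    _ ≤ B/h * (h^3/3*A + h^3/6*(m*C)) + B/h * (h^3/3*A2 + h^3/6*(m*C)) :=
        add_le_add hint1 hint2
    _ = (μ - ν)^2/4 * B * ((1/3) * (A + A2) + (1/3) * m * C) := hfin
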